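/- For every positive integer n and each integer 1 ≤ k ≤ n, the sum of q^{(a-1)+(b-2)+(c-1)+(d-1)} over 4-tuples (a,b,c,d) with b = k+1, 1 ≤ a ≤ k, and 1 ≤ d ≤ c ≤ k, multiplied by (1+q), equals [k]_q · q^{k-1} · [k+1]_q · [k]_q. -/

import Mathlib

open Polynomial

/-- The q-analogue [m]_q = 1 + q + ... + q^{m-1} as a polynomial in q = X. -/
noncomputable def qa (m : ℕ) : Polynomial ℤ := ∑ j ∈ Finset.range m, X ^ j

lemma qa_succ (m : ℕ) : qa (m + 1) = qa m + X ^ m := by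
  simp [qa, Finset.sum_range_succ]

lemma triangle_sum (k : ℕ) :
    (1 + X) * (∑ c ∈ Finset.range k, ∑ d ∈ Finset.range (c + 1),
        (X : Polynomial ℤ) ^ (c + d)) = qa (k + 1) * qa k := by
  induction k with
  | zero => simp [qa]
  | succ k ih =>
    rw [Finset.sum_range_succ, mul_add, ih]
    have h1 : ∑ d ∈ Finset.range (k + 1), (X : Polynomial ℤ) ^ (k + d)
        = X ^ k * qa (k + 1) := by
      simp [qa, Finset.mul_sum, pow_add]
    rw [h1, qa_succ (k+1), qa_succ k]
    ring

lemma sum_Icc_pow (m : ℕ) :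
    ∑ a ∈ Finset.Icc 1 m, (X : Polynomial ℤ) ^ (a - 1) = qa m := by
  rw [← Finset.Ico_add_one_right_eq_Icc, Finset.sum_Ico_eq_sum_range]
  simp [qa]

theorem taxicab_qcount_layer (n k : ℕ) (hk : 1 ≤ k) (hkn : k ≤ n) :
    (1 + X) * (∑ p ∈ (Finset.Icc 1 k ×ˢ Finset.Icc (k + 1) (k + 1) ×ˢ
              Finset.Icc 1 k ×ˢ Finset.Icc 1 k).filter
        (fun p : ℕ × ℕ × ℕ × ℕ => p.2.2.2 ≤ p.2.2.1),
        (X : Polynomial ℤ) ^ ((p.1 - 1) + (p.2.1 - 2) + (p.2.2.1 - 1) + (p.2.2.2 - 1)))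
      = qa k * X ^ (k - 1) * (qa (k + 1) * qa k) := by
  have key : (∑ p ∈ (Finset.Icc 1 k ×ˢ Finset.Icc (k + 1) (k + 1) ×ˢ
              Finset.Icc 1 k ×ˢ Finset.Icc 1 k).filter
        (fun p : ℕ × ℕ × ℕ × ℕ => p.2.2.2 ≤ p.2.2.1),
        (X : Polynomial ℤ) ^ ((p.1 - 1) + (p.2.1 - 2) + (p.2.2.1 - 1) + (p.2.2.2 - 1)))
      = (∑ a ∈ Finset.Icc 1 k, (X : Polynomial ℤ) ^ (a - 1)) * X ^ (k - 1) *
        (∑ c ∈ Finset.range k, ∑ d ∈ Finset.range (c + 1),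
          (X : Polynomial ℤ) ^ (c + d)) := by
    rw [Finset.sum_filter, Finset.sum_product, Finset.sum_mul, Finset.sum_mul]
    refine Finset.sum_congr rfl fun a _ => ?_
    rw [Finset.sum_product, Finset.Icc_self, Finset.sum_singleton, Finset.sum_product]
    have hb : k + 1 - 2 = k - 1 := by omega
    have step : ∀ c ∈ Finset.Icc 1 k,
        (∑ d ∈ Finset.Icc 1 k, if d ≤ c then
          (X : Polynomial ℤ) ^ ((a - 1) + (k + 1 - 2) + (c - 1) + (d - 1)) else 0)
        = ∑ d ∈ Finset.Icc 1 c,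
            (X : Polynomial ℤ) ^ ((a - 1) + (k - 1) + (c - 1) + (d - 1)) := by
      intro c hc
      rw [Finset.mem_Icc] at hc
      rw [← Finset.sum_filter]
      have : Finset.filter (fun d => d ≤ c) (Finset.Icc 1 k) = Finset.Icc 1 c := by
        ext d
        simp only [Finset.mem_filter, Finset.mem_Icc]
        omega
      rw [this, hb]
    rw [Finset.sum_congr rfl step]
    have : ∑ c ∈ Finset.Icc 1 k, ∑ d ∈ Finset.Icc 1 c,
        (X : Polynomial ℤ) ^ ((a - 1) + (k - 1) + (c - 1) + (d - 1))
        = ∑ c ∈ Finset.range k, ∑ d ∈ Finset.range (c + 1),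
          (X : Polynomial ℤ) ^ ((a - 1) + (k - 1) + (c + d)) := by
      rw [← Finset.Ico_add_one_right_eq_Icc, Finset.sum_Ico_eq_sum_range]
      refine Finset.sum_congr (by congr 1 <;> omega) fun c _ => ?_
      rw [← Finset.Ico_add_one_right_eq_Icc, Finset.sum_Ico_eq_sum_range]
      refine Finset.sum_congr (by congr 1 <;> omega) fun d _ => ?_
      congr 1
      omega
    rw [this]
    simp [Finset.mul_sum, pow_add, mul_assoc]
  rw [key, sum_Icc_pow]
  have := triangle_sum k
  ring_nf
  ring_nf at this
  linear_combination (qa k * X ^ (k-1)) * this
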